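/- Let κ ≥ 1 be a real number, f the filter function associated to κ, and let A be an N×N positive semidefinite complex matrix with ‖A‖ ≤ 1 and rank(A) ≤ r. With spectral decomposition A = Σ_j λ_j |u_j⟩⟨u_j|, one has |Σ_j λ_j f(λ_j)² − (1/(4√κ))·tr(√A)| ≤ r/(4κ); equivalently, the trace of the matrix obtained by applying g(λ) = λ·f(λ)² to A differs from (1/(4√κ))·tr(√A) by at most r/(4κ). -/

import Mathlib

open Real Matrix
open scoped Matrix.Norms.L2Operator ComplexOrder

/-- The square root of a positive semidefinite matrix, as `Matrix.PosSemidef.sqrt` was defined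
in the older Mathlib (removed since). -/
noncomputable def Matrix.PosSemidef.sqrt {n 𝕜 : Type*} [Fintype n] [DecidableEq n] [RCLike 𝕜]
    {A : Matrix n n 𝕜} (hA : A.PosSemidef) : Matrix n n 𝕜 :=
  (hA.1.eigenvectorUnitary : Matrix n n 𝕜) *
    diagonal (((↑) : ℝ → 𝕜) ∘ (√·) ∘ hA.1.eigenvalues) *
    (star hA.1.eigenvectorUnitary : Matrix n n 𝕜)

/-- The filter function associated to the parameter `κ`. -/
noncomputable def filterFun (κ : ℝ) : ℝ → ℝ := fun l =>
  if 1 < l then (1/2) * κ ^ (-(1/4 : ℝ))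
  else if 1/κ ≤ l then (1/2) * κ ^ (-(1/4 : ℝ)) * l ^ (-(1/4 : ℝ))
  else if 1/(2*κ) ≤ l then (1/2) * Real.sin ((π/2) * ((l - 1/(2*κ)) / (1/κ - 1/(2*κ))))
  else 0

lemma filterFun_abs_le_half (κ : ℝ) (hκ : 1 ≤ κ) (l : ℝ) (hl : 0 ≤ l) (hl1 : l < 1/κ) :
    |filterFun κ l| ≤ 1/2 := by
  have hκ0 : (0:ℝ) < κ := lt_of_lt_of_le one_pos hκ
  unfold filterFun
  have h1 : ¬ (1 < l) := by
    push_neg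
    exact le_trans hl1.le (by rw [div_le_one hκ0]; exact hκ)
  have h2 : ¬ (1/κ ≤ l) := not_le.mpr hl1
  rw [if_neg h1, if_neg h2]
  split_ifs with h3
  · rw [abs_mul]
    have := Real.abs_sin_le_one ((π/2) * ((l - 1/(2*κ)) / (1/κ - 1/(2*κ))))
    rw [abs_of_pos (by norm_num : (0:ℝ) < 1/2)]
    nlinarith [abs_nonneg (Real.sin ((π/2) * ((l - 1/(2*κ)) / (1/κ - 1/(2*κ)))))]
  · norm_num

lemma key_bound (κ : ℝ) (hκ : 1 ≤ κ) {l : ℝ} (h0 : 0 ≤ l) (h1 : l ≤ 1) :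
    |l * (filterFun κ l)^2 - 1/(4*Real.sqrt κ) * Real.sqrt l| ≤ 1/(4*κ) := by
  have hκ0 : (0:ℝ) < κ := lt_of_lt_of_le one_pos hκ
  have hsκ : (0:ℝ) < Real.sqrt κ := Real.sqrt_pos.mpr hκ0
  have hss : Real.sqrt κ * Real.sqrt κ = κ := Real.mul_self_sqrt hκ0.le
  rcases le_or_gt (1/κ) l with hc | hc
  · -- exact regime: the difference is zero
    have hl0 : 0 < l := lt_of_lt_of_le (by positivity) hc
    have : l * (filterFun κ l)^2 = 1/(4*Real.sqrt κ) * Real.sqrt l := by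
      unfold filterFun
      rw [if_neg (not_lt.mpr h1), if_pos hc]
      have e1 : ((1/2) * κ ^ (-(1/4 : ℝ)) * l ^ (-(1/4 : ℝ)))^2
          = (1/4) * κ ^ (-(1/2 : ℝ)) * l ^ (-(1/2 : ℝ)) := by
        rw [mul_pow, mul_pow, ← Real.rpow_natCast (κ ^ (-(1/4:ℝ))) 2,
          ← Real.rpow_natCast (l ^ (-(1/4:ℝ))) 2, ← Real.rpow_mul hκ0.le,
          ← Real.rpow_mul hl0.le]
        norm_num
      rw [e1]
      have e2 : l * ((1/4) * κ ^ (-(1/2 : ℝ)) * l ^ (-(1/2 : ℝ)))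
          = (1/4) * κ ^ (-(1/2 : ℝ)) * l ^ ((1/2 : ℝ)) := by
        rw [show l * ((1/4) * κ ^ (-(1/2 : ℝ)) * l ^ (-(1/2 : ℝ)))
            = (1/4) * κ ^ (-(1/2 : ℝ)) * (l ^ (1:ℝ) * l ^ (-(1/2 : ℝ))) by
          rw [Real.rpow_one]; ring]
        rw [← Real.rpow_add hl0]
        norm_num
      rw [e2, Real.rpow_neg hκ0.le, ← Real.sqrt_eq_rpow, ← Real.sqrt_eq_rpow]
      field_simp
    rw [this, sub_self, abs_zero]
    positivity
  · -- small eigenvalue regime: both terms lie in [0, 1/(4κ)]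
    set a := l * (filterFun κ l)^2 with ha
    set b := 1/(4*Real.sqrt κ) * Real.sqrt l with hb
    have ha0 : 0 ≤ a := by positivity
    have hb0 : 0 ≤ b := by positivity
    have haU : a ≤ 1/(4*κ) := by
      have hf : |filterFun κ l| ≤ 1/2 := filterFun_abs_le_half κ hκ l h0 hc
      have hf2 : (filterFun κ l)^2 ≤ 1/4 := by
        have := sq_abs (filterFun κ l)
        nlinarith [abs_nonneg (filterFun κ l)]
      calc a ≤ l * (1/4) := by
              apply mul_le_mul_of_nonneg_left hf2 h0
        _ ≤ (1/κ) * (1/4) := by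
              apply mul_le_mul_of_nonneg_right hc.le (by norm_num)
        _ = 1/(4*κ) := by field_simp
    have hbU : b ≤ 1/(4*κ) := by
      have hsl : Real.sqrt l ≤ Real.sqrt (1/κ) := Real.sqrt_le_sqrt hc.le
      have hsinv : Real.sqrt (1/κ) = 1 / Real.sqrt κ := by
        rw [one_div, Real.sqrt_inv, one_div]
      have hsl' : Real.sqrt l ≤ 1 / Real.sqrt κ := by rw [← hsinv]; exact hsl
      calc b ≤ 1/(4*Real.sqrt κ) * (1/Real.sqrt κ) :=
              mul_le_mul_of_nonneg_left hsl' (by positivity)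
        _ = 1/(4*κ) := by field_simp; nlinarith
    rw [abs_sub_le_iff]
    constructor <;> linarith

theorem stmt2 {N : ℕ} (κ : ℝ) (hκ : 1 ≤ κ) (r : ℕ)
    (A : Matrix (Fin N) (Fin N) ℂ) (hA : A.PosSemidef) (hAnorm : ‖A‖ ≤ 1)
    (hrank : A.rank ≤ r) :
    |(∑ j, hA.1.eigenvalues j * (filterFun κ (hA.1.eigenvalues j))^2)
      - (1 / (4 * Real.sqrt κ)) * (hA.sqrt.trace).re| ≤ r / (4*κ) := by
  have hκ0 : (0:ℝ) < κ := lt_of_lt_of_le one_pos hκ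
  set lam := hA.1.eigenvalues with hlam
  -- trace of the square root
  have htrace : (hA.sqrt.trace).re = ∑ j, Real.sqrt (lam j) := by
    have : hA.sqrt.trace = Matrix.trace
        (Matrix.diagonal (RCLike.ofReal ∘ Real.sqrt ∘ lam : Fin N → ℂ)) := by
      rw [Matrix.PosSemidef.sqrt, Matrix.trace_mul_cycle]
      rw [show ((star hA.1.eigenvectorUnitary : Matrix (Fin N) (Fin N) ℂ))
          * hA.1.eigenvectorUnitary.1 = 1 from
        Unitary.star_mul_self_of_mem hA.1.eigenvectorUnitary.2, one_mul]
    rw [this, Matrix.trace_diagonal]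
    push_cast
    simp
  rw [htrace, Finset.mul_sum, ← Finset.sum_sub_distrib]
  -- per-eigenvalue facts
  have h0 : ∀ j, 0 ≤ lam j := fun j => hA.eigenvalues_nonneg j
  have h1 : ∀ j, lam j ≤ 1 := by
    intro j
    have hmem : (lam j : ℂ) ∈ spectrum ℂ A := by
      have := hA.1.eigenvalues_mem_spectrum_real j
      exact spectrum.algebraMap_mem ℂ this
    haveI : Nonempty (Fin N) := ⟨j⟩
    haveI : NormOneClass (Matrix (Fin N) (Fin N) ℂ) := ⟨CStarRing.norm_one⟩
    have := spectrum.norm_le_norm_of_mem hmem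
    have habs : |lam j| ≤ ‖A‖ := by simpa using this
    calc lam j ≤ |lam j| := le_abs_self _
      _ ≤ 1 := le_trans habs hAnorm
  -- bound the sum by the number of nonzero eigenvalues
  classical
  have hd0 : ∀ j, lam j = 0 →
      lam j * (filterFun κ (lam j))^2 - 1 / (4 * Real.sqrt κ) * Real.sqrt (lam j) = 0 := by
    intro j hj; rw [hj]; simp
  calc |∑ j, (lam j * (filterFun κ (lam j))^2 - 1 / (4 * Real.sqrt κ) * Real.sqrt (lam j))|
      ≤ ∑ j, |lam j * (filterFun κ (lam j))^2 - 1 / (4 * Real.sqrt κ) * Real.sqrt (lam j)| :=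
        Finset.abs_sum_le_sum_abs _ _
    _ = ∑ j ∈ Finset.univ.filter (fun j => lam j ≠ 0),
          |lam j * (filterFun κ (lam j))^2 - 1 / (4 * Real.sqrt κ) * Real.sqrt (lam j)| := by
        rw [Finset.sum_filter_of_ne]
        intro j _ hne
        intro hj
        exact hne (by rw [hd0 j hj, abs_zero])
    _ ≤ ∑ j ∈ Finset.univ.filter (fun j => lam j ≠ 0), 1/(4*κ) := by
        apply Finset.sum_le_sum
        intro j _
        exact key_bound κ hκ (h0 j) (h1 j)
    _ = (Finset.univ.filter (fun j => lam j ≠ 0)).card * (1/(4*κ)) := by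
        rw [Finset.sum_const, nsmul_eq_mul]
    _ ≤ r * (1/(4*κ)) := by
        apply mul_le_mul_of_nonneg_right _ (by positivity)
        have hcard : (Finset.univ.filter (fun j => lam j ≠ 0)).card
            = Fintype.card {i // lam i ≠ 0} := (Fintype.card_subtype _).symm
        rw [hcard]
        exact_mod_cast le_trans (le_of_eq (hA.1.rank_eq_card_non_zero_eigs).symm) hrank
    _ = r / (4*κ) := by ring
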